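/- (Wiener–Hopf factorization.) Every finite list P of integers factors uniquely as P = A ++ B, where A is a list all of whose nonempty suffix sums are < 0 (a reverse-positive path) and B is a list all of whose prefix sums are ≥ 0 (a nonnegative path); the cut point is the first point at which the sequence of partial sums of P attains its minimum. -/

import Mathlib

lemma wh_main (A B : List ℤ)
    (hA : ∀ i : ℕ, i < A.length → (A.drop i).sum < 0)
    (hB : ∀ i : ℕ, 0 ≤ (B.take i).sum) :
    (∀ i : ℕ, (((A ++ B)).take A.length).sum ≤ (((A ++ B)).take i).sum) ∧
    (∀ i : ℕ, i < A.length → (((A ++ B)).take A.length).sum < (((A ++ B)).take i).sum) := by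
  have hlen : ((A ++ B).take A.length) = A := List.take_left
  constructor
  · intro i
    rw [hlen, List.take_append, List.sum_append]
    rcases le_or_gt A.length i with h | h
    · rw [List.take_of_length_le h]
      linarith [hB (i - A.length)]
    · have h0 : i - A.length = 0 := Nat.sub_eq_zero_of_le h.le
      rw [h0]
      simp only [List.take_zero, List.sum_nil, add_zero]
      have hsplit : (A.take i).sum + (A.drop i).sum = A.sum := by
        rw [← List.sum_append, List.take_append_drop]
      linarith [hA i h]
  · intro i h
    rw [hlen, List.take_append, List.sum_append]
    have h0 : i - A.length = 0 := Nat.sub_eq_zero_of_le h.le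
    rw [h0]
    simp only [List.take_zero, List.sum_nil, add_zero]
    have hsplit : (A.take i).sum + (A.drop i).sum = A.sum := by
      rw [← List.sum_append, List.take_append_drop]
    linarith [hA i h]

/-- (Wiener–Hopf factorization.) Every finite list `P` of integers factors uniquely as
`P = A ++ B` where all nonempty suffix sums of `A` are < 0 (`A` is reverse-positive) and
all prefix sums of `B` are ≥ 0 (`B` is nonnegative); moreover the cut point is the first
point at which the sequence of prefix sums of `P` attains its minimum. -/
theorem geode_stmt19 (P : List ℤ) :
    (∃! AB : List ℤ × List ℤ,
      P = AB.1 ++ AB.2 ∧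
      (∀ i : ℕ, i < AB.1.length → ((AB.1).drop i).sum < 0) ∧
      (∀ i : ℕ, 0 ≤ ((AB.2).take i).sum)) ∧
    (∀ A B : List ℤ, P = A ++ B →
      (∀ i : ℕ, i < A.length → (A.drop i).sum < 0) →
      (∀ i : ℕ, 0 ≤ (B.take i).sum) →
      (∀ i : ℕ, (P.take A.length).sum ≤ (P.take i).sum) ∧
      (∀ i : ℕ, i < A.length → (P.take A.length).sum < (P.take i).sum)) := by
  have second : ∀ A B : List ℤ, P = A ++ B →
      (∀ i : ℕ, i < A.length → (A.drop i).sum < 0) →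
      (∀ i : ℕ, 0 ≤ (B.take i).sum) →
      (∀ i : ℕ, (P.take A.length).sum ≤ (P.take i).sum) ∧
      (∀ i : ℕ, i < A.length → (P.take A.length).sum < (P.take i).sum) := by
    intro A B hP hA hB
    subst hP
    exact wh_main A B hA hB
  refine ⟨?_, second⟩
  -- find the first minimum
  have hQ : ∃ n, ∀ j ≤ P.length, (P.take n).sum ≤ (P.take j).sum := by
    obtain ⟨n, hn, hmin⟩ := Finset.exists_min_image (Finset.range (P.length + 1))
      (fun i => (P.take i).sum) ⟨0, by simp⟩
    exact ⟨n, fun j hj => hmin j (Finset.mem_range.mpr (by omega))⟩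
  classical
  set k := Nat.find hQ with hkdef
  have hk := Nat.find_spec hQ
  have hkle : k ≤ P.length := by
    obtain ⟨n, hn, hmin⟩ := Finset.exists_min_image (Finset.range (P.length + 1))
      (fun i => (P.take i).sum) ⟨0, by simp⟩
    have hnQ : ∀ j ≤ P.length, (P.take n).sum ≤ (P.take j).sum :=
      fun j hj => hmin j (Finset.mem_range.mpr (by omega))
    have := Nat.find_min' hQ hnQ
    have := Finset.mem_range.mp hn
    omega
  have hall : ∀ j, (P.take k).sum ≤ (P.take j).sum := by
    intro j
    rcases le_or_gt j P.length with h | h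
    · exact hk j h
    · rw [List.take_of_length_le h.le]
      have := hk P.length le_rfl
      simpa using this
  have hlt : ∀ i, i < k → (P.take k).sum < (P.take i).sum := by
    intro i hi
    have hni := Nat.find_min hQ hi
    push_neg at hni
    obtain ⟨j, hj, hjv⟩ := hni
    exact lt_of_le_of_lt (hk j hj) hjv
  have hAlen : (P.take k).length = k := by
    rw [List.length_take]; omega
  have hPsplit : P = P.take k ++ P.drop k := (List.take_append_drop k P).symm
  have hA : ∀ i : ℕ, i < (P.take k).length → ((P.take k).drop i).sum < 0 := by
    intro i hi
    rw [hAlen] at hi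
    have h1 : (P.take k).take i = P.take i := by
      rw [List.take_take, min_eq_left hi.le]
    have hsplit : ((P.take k).take i).sum + ((P.take k).drop i).sum = (P.take k).sum := by
      rw [← List.sum_append, List.take_append_drop]
    rw [h1] at hsplit
    linarith [hlt i hi]
  have hB : ∀ i : ℕ, 0 ≤ ((P.drop k).take i).sum := by
    intro i
    have h1 : P.take (k + i) = P.take k ++ (P.drop k).take i := List.take_add
    have h2 := hall (k + i)
    rw [h1, List.sum_append] at h2
    linarith
  refine ⟨(P.take k, P.drop k), ⟨hPsplit, hA, hB⟩, ?_⟩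
  rintro ⟨A', B'⟩ ⟨hP', hA', hB'⟩
  have h2 := second A' B' hP' hA' hB'
  have hlenk : A'.length = k := by
    by_contra hne
    rcases Nat.lt_or_ge A'.length k with h | h
    · have := hlt A'.length h
      have := h2.1 k
      linarith
    · have hkk : k < A'.length := by omega
      have := h2.2 k hkk
      have := hall A'.length
      linarith
  have hA'eq : A' = P.take k := by
    rw [hP', ← hlenk, List.take_left]
  have hB'eq : B' = P.drop k := by
    rw [hP', ← hlenk, List.drop_left]
  simp [hA'eq, hB'eq]
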